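/- Let q be a primitive m-th root of unity in a field K and h a positive divisor of m, k = m/h. Every simple module over the rank-2 quantum torus A_{q^h} (generators X^{±1}, Y^{±1}, relation XY = q^h YX) over an algebraically closed field K that is finite-dimensional is isomorphic to M(α,β) for some α, β ∈ K*, where M(α,β) is the k-dimensional module with basis e(a), a ∈ ℤ/kℤ, and actions e(a)·X = α e(a+1), e(a)·Y = α^{-1}β(q^h)^{a-1} e(a−1). -/

import Mathlib

/-- The standard basis vector `e a` of the `K`-vector space `ZMod k → K`. -/
def e (K : Type*) [Field K] (k : ℕ) (a : ZMod k) : ZMod k → K := Pi.single a 1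

/-- Over an algebraically closed field `K`, every finite-dimensional simple module `V`
over the rank-2 quantum torus `A_{q^h}` (encoded as a pair of invertible operators
`X, Y` with `XY = q^h·YX` and no nontrivial invariant subspaces) is isomorphic to the
standard module `M(α,β)` for some `α, β ∈ K*`. -/
theorem stmt_16 {K : Type*} [Field K] [IsAlgClosed K] (m h k : ℕ) (hm : 0 < m)
    (q : Kˣ) (hq : orderOf q = m) (hh : 0 < h) (hdvd : h ∣ m) (hk : k = m / h)
    (V : Type*) [AddCommGroup V] [Module K V] [FiniteDimensional K V] [Nontrivial V]
    (X Y : V →ₗ[K] V) (hXb : Function.Bijective X) (hYb : Function.Bijective Y)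
    (hrel : ∀ v, Y (X v) = ((q : K) ^ h) • X (Y v))
    (hsimple : ∀ P : Submodule K V,
      (∀ v ∈ P, X v ∈ P) → (∀ v ∈ P, Y v ∈ P) → P = ⊥ ∨ P = ⊤) :
    ∃ (α β : K), α ≠ 0 ∧ β ≠ 0 ∧
      ∃ (Xm Ym : (ZMod k → K) →ₗ[K] (ZMod k → K)) (φ : (ZMod k → K) ≃ₗ[K] V),
        (∀ a : ZMod k, Xm (e K k a) = α • e K k (a + 1)) ∧
        (∀ a : ZMod k, Ym (e K k a) =
          (α⁻¹ * β * ((q : K) ^ h) ^ (a - 1).val) • e K k (a - 1)) ∧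
        (∀ v, φ (Xm v) = X (φ v)) ∧ (∀ v, φ (Ym v) = Y (φ v)) := by
  -- basic setup
  have hhk : h * k = m := by rw [hk, Nat.mul_div_cancel' hdvd]
  have hk0 : 0 < k := by
    rcases Nat.eq_zero_or_pos k with h0 | h0
    · exfalso; rw [h0, mul_zero] at hhk; omega
    · exact h0
  haveI : NeZero k := ⟨hk0.ne'⟩
  set ζu : Kˣ := q ^ h with hζu
  set ζ : K := (ζu : K) with hζ
  have hζcoe : ((q : K) ^ h) = ζ := by simp [hζ, hζu]
  have hζne : ζ ≠ 0 := Units.ne_zero ζu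
  have horder : orderOf ζu = k := by
    rw [hζu, orderOf_pow' q hh.ne', hq, Nat.gcd_eq_right hdvd, hk]
  have hζuk : ζu ^ k = 1 := by rw [← horder]; exact pow_orderOf_eq_one ζu
  have hζk : ζ ^ k = 1 := by
    rw [hζ, ← Units.val_pow_eq_pow_val, hζuk, Units.val_one]
  have hζmod : ∀ s : ℕ, ζ ^ s = ζ ^ (s % k) := by
    intro s
    conv_lhs => rw [← Nat.div_add_mod s k, pow_add, pow_mul, hζk, one_pow, one_mul]
  -- powers of X and commutation with Y
  have hXpow_inj : ∀ n : ℕ, Function.Injective (X ^ n : V →ₗ[K] V) := by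
    intro n
    induction n with
    | zero => simp [Function.Injective]
    | succ n ih =>
      rw [pow_succ]
      intro a b hab
      exact hXb.injective (ih hab)
  have hYXn : ∀ (n : ℕ) (v : V), Y ((X ^ n : V →ₗ[K] V) v)
      = ζ ^ n • (X ^ n : V →ₗ[K] V) (Y v) := by
    intro n
    induction n with
    | zero => simp
    | succ n ih =>
      intro v
      rw [pow_succ]
      simp only [Module.End.mul_apply]
      rw [ih (X v), hrel v, hζcoe, map_smul, smul_smul, ← pow_succ]
  have hcommXn : ∀ (n : ℕ) (u : V), X ((X ^ n : V →ₗ[K] V) u) = (X ^ n : V →ₗ[K] V) (X u) := by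
    intro n u
    rw [← Module.End.mul_apply, ← pow_succ', pow_succ, Module.End.mul_apply]
  -- X^k is a scalar ξ
  obtain ⟨ξ, hξ⟩ := Module.End.exists_eigenvalue (X ^ k : Module.End K V)
  have hXkcomm : ∀ v, Y ((X ^ k : V →ₗ[K] V) v) = (X ^ k : V →ₗ[K] V) (Y v) := by
    intro v; rw [hYXn, hζk, one_smul]
  have hE : Module.End.eigenspace (X ^ k : Module.End K V) ξ = ⊤ := by
    rcases hsimple (Module.End.eigenspace (X ^ k : Module.End K V) ξ)
      (fun v hv => by
        rw [Module.End.mem_eigenspace_iff] at hv ⊢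
        rw [← hcommXn k v, hv, map_smul])
      (fun v hv => by
        rw [Module.End.mem_eigenspace_iff] at hv ⊢
        rw [← hXkcomm, hv, map_smul]) with hbot | htop
    · exact absurd hbot hξ
    · exact htop
  have hXk : ∀ v : V, (X ^ k : V →ₗ[K] V) v = ξ • v := by
    intro v
    have : v ∈ Module.End.eigenspace (X ^ k : Module.End K V) ξ := hE ▸ Submodule.mem_top
    exact Module.End.mem_eigenspace_iff.mp this
  have hξne : ξ ≠ 0 := by
    intro h0
    obtain ⟨v, hv⟩ := exists_ne (0 : V)
    have := hXk v
    rw [h0, zero_smul] at this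
    exact hv (hXpow_inj k (by simpa using this))
  -- eigenvector of T = X ∘ Y
  obtain ⟨β0, hβ0⟩ := Module.End.exists_eigenvalue (X ∘ₗ Y : Module.End K V)
  obtain ⟨v, hvT⟩ := hβ0.exists_hasEigenvector
  have hv0 : v ≠ 0 := hvT.right
  have hTv : X (Y v) = β0 • v := hvT.apply_eq_smul
  have hβ0ne : β0 ≠ 0 := by
    intro h0
    rw [h0, zero_smul] at hTv
    exact hv0 (hYb.injective (by simpa using hXb.injective (by simpa using hTv)))
  -- choose α with α^k = ξ
  obtain ⟨α, hα⟩ := IsAlgClosed.exists_pow_nat_eq ξ hk0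
  have hαne : α ≠ 0 := by
    intro h0; rw [h0, zero_pow hk0.ne'] at hα; exact hξne hα.symm
  -- the family w
  set w : ZMod k → V := fun a => (α ^ a.val)⁻¹ • (X ^ a.val : V →ₗ[K] V) v with hw
  have hval_add_one : ∀ a : ZMod k, (a + 1).val = (a.val + 1) % k := by
    intro a
    conv_lhs => rw [← ZMod.natCast_zmod_val a]
    rw [← Nat.cast_one, ← Nat.cast_add, ZMod.val_natCast]
  have hwne : ∀ a, w a ≠ 0 := by
    intro a h0
    rw [hw] at h0
    simp only [smul_eq_zero, inv_eq_zero, pow_eq_zero_iff', map_eq_zero_iff] at h0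
    rcases h0 with h0 | h0
    · exact hαne h0.1
    · exact hv0 (hXpow_inj a.val (by simpa using h0))
  have hXw : ∀ a : ZMod k, X (w a) = α • w (a + 1) := by
    intro a
    have hlt : a.val < k := a.val_lt
    rcases Nat.lt_or_ge (a.val + 1) k with hcase | hcase
    · have hv' : (a + 1).val = a.val + 1 := by
        rw [hval_add_one, Nat.mod_eq_of_lt hcase]
      have h1 : X ((X ^ a.val : V →ₗ[K] V) v) = (X ^ (a.val + 1) : V →ₗ[K] V) v := by
        rw [pow_succ', Module.End.mul_apply]
      simp only [hw, hv', map_smul]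
      rw [h1, smul_smul]
      congr 1
      rw [pow_succ, mul_inv]
      field_simp
    · have hak : a.val + 1 = k := by omega
      have hv' : (a + 1).val = 0 := by
        rw [hval_add_one, hak, Nat.mod_self]
      have h1 : X ((X ^ a.val : V →ₗ[K] V) v) = (X ^ (a.val + 1) : V →ₗ[K] V) v := by
        rw [pow_succ', Module.End.mul_apply]
      simp only [hw, hv', map_smul, pow_zero, inv_one, one_smul]
      rw [h1, hak, hXk v, smul_smul]
      congr 1
      have h2 : α ^ a.val * α = ξ := by rw [← pow_succ, hak, hα]
      rw [← h2, ← mul_assoc, inv_mul_cancel₀ (pow_ne_zero _ hαne), one_mul]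
  have hXYw : ∀ a : ZMod k, X (Y (w a)) = (β0 * ζ ^ a.val) • w a := by
    intro a
    have hYwa : Y (w a) = (α ^ a.val)⁻¹ • ζ ^ a.val • (X ^ a.val : V →ₗ[K] V) (Y v) := by
      simp only [hw, map_smul]
      rw [hYXn a.val v]
    rw [hYwa, map_smul, map_smul, hcommXn, hTv, map_smul]
    simp only [hw, smul_smul]
    congr 1
    ring
  have hYw : ∀ a : ZMod k, Y (w a) = (α⁻¹ * (β0 * ζ) * ζ ^ (a - 1).val) • w (a - 1) := by
    intro a
    have hsub : a - 1 + 1 = a := by ring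
    have hz : ζ ^ ((a - 1).val + 1) = ζ ^ a.val := by
      have hmodeq : ((a - 1).val + 1) % k = a.val := by
        rw [← hval_add_one (a - 1), hsub]
      rw [hζmod ((a - 1).val + 1), hmodeq]
    have hsc : α⁻¹ * (β0 * ζ) * ζ ^ (a - 1).val * α = β0 * ζ ^ a.val := by
      rw [← hz, pow_succ]
      field_simp
    apply hXb.injective
    rw [hXYw a, map_smul, hXw (a - 1), hsub]
    conv_rhs => rw [smul_smul]
    rw [hsc]
  -- linear independence of w via eigenvalues of X ∘ Y
  have hindep : LinearIndependent K w := by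
    apply Module.End.eigenvectors_linearIndependent' (X ∘ₗ Y : Module.End K V)
      (fun a : ZMod k => β0 * ζ ^ a.val)
    · intro a b hab
      have : ζ ^ a.val = ζ ^ b.val := by
        exact mul_left_cancel₀ hβ0ne hab
      have hu : ζu ^ a.val = ζu ^ b.val := by
        ext; simpa [hζ] using this
      have := pow_eq_pow_iff_modEq.mp hu
      rw [horder] at this
      have : a.val = b.val := by
        have h1 := a.val_lt
        have h2 := b.val_lt
        unfold Nat.ModEq at this
        rwa [Nat.mod_eq_of_lt h1, Nat.mod_eq_of_lt h2] at this
      exact ZMod.val_injective k this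
    · intro a
      exact ⟨Module.End.mem_eigenspace_iff.mpr (hXYw a), hwne a⟩
  -- build φ
  set b : Module.Basis (ZMod k) K (ZMod k → K) := Pi.basisFun K (ZMod k) with hb
  set φ₀ : (ZMod k → K) →ₗ[K] V := b.constr K w with hφ₀
  have hφ₀e : ∀ a : ZMod k, φ₀ (e K k a) = w a := by
    intro a
    have : e K k a = b a := by simp [e, hb]
    rw [this, hφ₀, b.constr_basis]
  have hφ₀inj : Function.Injective φ₀ := by
    rw [← LinearMap.ker_eq_bot, LinearMap.ker_eq_bot']
    intro c hc
    rw [hφ₀, Module.Basis.constr_apply_fintype] at hc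
    have : ∀ a, (b.equivFun c) a = 0 := Fintype.linearIndependent_iff.mp hindep _ hc
    ext a
    simpa [hb] using this a
  have hφ₀surj : Function.Surjective φ₀ := by
    rw [← LinearMap.range_eq_top, hφ₀, Module.Basis.constr_range]
    rcases hsimple (Submodule.span K (Set.range w))
      (fun u hu => by
        induction hu using Submodule.span_induction with
        | mem x hx =>
          obtain ⟨a, rfl⟩ := hx
          rw [hXw a]
          exact Submodule.smul_mem _ _ (Submodule.subset_span ⟨a + 1, rfl⟩)
        | zero => simp
        | add x y _ _ hx hy => rw [map_add]; exact Submodule.add_mem _ hx hy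
        | smul c x _ hx => rw [map_smul]; exact Submodule.smul_mem _ _ hx)
      (fun u hu => by
        induction hu using Submodule.span_induction with
        | mem x hx =>
          obtain ⟨a, rfl⟩ := hx
          rw [hYw a]
          exact Submodule.smul_mem _ _ (Submodule.subset_span ⟨a - 1, rfl⟩)
        | zero => simp
        | add x y _ _ hx hy => rw [map_add]; exact Submodule.add_mem _ hx hy
        | smul c x _ hx => rw [map_smul]; exact Submodule.smul_mem _ _ hx) with hbot | htop
    · exfalso
      have : w 0 ∈ Submodule.span K (Set.range w) := Submodule.subset_span ⟨0, rfl⟩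
      rw [hbot] at this
      exact hwne 0 (by simpa using this)
    · exact htop
  set φ : (ZMod k → K) ≃ₗ[K] V := LinearEquiv.ofBijective φ₀ ⟨hφ₀inj, hφ₀surj⟩ with hφdef
  have hφe : ∀ a : ZMod k, φ (e K k a) = w a := hφ₀e
  refine ⟨α, β0 * ζ, hαne, mul_ne_zero hβ0ne hζne,
    φ.symm.toLinearMap ∘ₗ X ∘ₗ φ.toLinearMap,
    φ.symm.toLinearMap ∘ₗ Y ∘ₗ φ.toLinearMap, φ, ?_, ?_, ?_, ?_⟩
  · intro a
    simp only [LinearMap.comp_apply, LinearEquiv.coe_coe]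
    rw [hφe a, hXw a, map_smul, ← hφe (a + 1), LinearEquiv.symm_apply_apply]
  · intro a
    simp only [LinearMap.comp_apply, LinearEquiv.coe_coe]
    rw [hφe a, hYw a, map_smul, ← hφe (a - 1), LinearEquiv.symm_apply_apply, hζcoe]
  · intro u
    simp only [LinearMap.comp_apply, LinearEquiv.coe_coe, LinearEquiv.apply_symm_apply]
  · intro u
    simp only [LinearMap.comp_apply, LinearEquiv.coe_coe, LinearEquiv.apply_symm_apply]
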